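/- Let n ≥ 2 be an integer and suppose r₁, r₂ ∈ C²([0,∞)) both satisfy r''(t)/(1 − r'(t)²) + ((n−1)/t)·r'(t) = 1 for all t ∈ (0,∞), with r(0) = 0, r'(0) = 0, and 0 < r'(t) < 1 for all t ∈ (0,∞). Then r₁(t) = r₂(t) for all t ≥ 0. -/

import Mathlib

open Set Filter Topology

theorem stmt_3 (n : ℕ) (hn : 2 ≤ n) (r₁ r₁' r₁'' r₂ r₂' r₂'' : ℝ → ℝ)
    (hr₁' : ∀ t ∈ Set.Ici (0:ℝ), HasDerivWithinAt r₁ (r₁' t) (Set.Ici 0) t)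
    (hr₁'' : ∀ t ∈ Set.Ici (0:ℝ), HasDerivWithinAt r₁' (r₁'' t) (Set.Ici 0) t)
    (hcont₁ : ContinuousOn r₁'' (Set.Ici 0))
    (heq₁ : ∀ t ∈ Set.Ioi (0:ℝ),
      r₁'' t / (1 - (r₁' t) ^ 2) + ((n : ℝ) - 1) / t * r₁' t = 1)
    (h0₁ : r₁ 0 = 0) (h0₁' : r₁' 0 = 0)
    (hlt₁ : ∀ t ∈ Set.Ioi (0:ℝ), 0 < r₁' t ∧ r₁' t < 1)
    (hr₂' : ∀ t ∈ Set.Ici (0:ℝ), HasDerivWithinAt r₂ (r₂' t) (Set.Ici 0) t)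
    (hr₂'' : ∀ t ∈ Set.Ici (0:ℝ), HasDerivWithinAt r₂' (r₂'' t) (Set.Ici 0) t)
    (hcont₂ : ContinuousOn r₂'' (Set.Ici 0))
    (heq₂ : ∀ t ∈ Set.Ioi (0:ℝ),
      r₂'' t / (1 - (r₂' t) ^ 2) + ((n : ℝ) - 1) / t * r₂' t = 1)
    (h0₂ : r₂ 0 = 0) (h0₂' : r₂' 0 = 0)
    (hlt₂ : ∀ t ∈ Set.Ioi (0:ℝ), 0 < r₂' t ∧ r₂' t < 1) :
    ∀ t ∈ Set.Ici (0:ℝ), r₁ t = r₂ t := by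
  have hn1 : (1:ℝ) ≤ (n:ℝ) - 1 := by
    have : (2:ℝ) ≤ (n:ℝ) := by exact_mod_cast hn
    linarith
  set w : ℝ → ℝ := fun t => r₁' t - r₂' t with hwdef
  set A : ℝ → ℝ := fun t => -(r₁' t + r₂' t)
      - ((n:ℝ) - 1)/t * (1 - ((r₁' t)^2 + r₁' t * r₂' t + (r₂' t)^2)) with hAdef
  set φ : ℝ → ℝ := fun t => (w t)^2 with hφdef
  have hw0 : w 0 = 0 := by simp [hwdef, h0₁', h0₂']
  have hwderiv : ∀ t ∈ Ioi (0:ℝ), HasDerivAt w (A t * w t) t := by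
    intro t ht
    have ht' : (0:ℝ) < t := ht
    have hmem : Ici (0:ℝ) ∈ 𝓝 t := Ici_mem_nhds ht'
    have h1 := ((hr₁'' t ht'.le).sub (hr₂'' t ht'.le)).hasDerivAt hmem
    have hp₁ := hlt₁ t ht
    have hp₂ := hlt₂ t ht
    have hne₁ : 1 - (r₁' t)^2 ≠ 0 := by nlinarith [hp₁.1, hp₁.2]
    have hne₂ : 1 - (r₂' t)^2 ≠ 0 := by nlinarith [hp₂.1, hp₂.2]
    have e₁ : r₁'' t = (1 - ((n:ℝ)-1)/t * r₁' t) * (1 - (r₁' t)^2) := by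
      have h := heq₁ t ht
      have h' : r₁'' t / (1 - (r₁' t)^2) = 1 - ((n:ℝ)-1)/t * r₁' t := by linarith
      rw [div_eq_iff hne₁] at h'
      exact h'
    have e₂ : r₂'' t = (1 - ((n:ℝ)-1)/t * r₂' t) * (1 - (r₂' t)^2) := by
      have h := heq₂ t ht
      have h' : r₂'' t / (1 - (r₂' t)^2) = 1 - ((n:ℝ)-1)/t * r₂' t := by linarith
      rw [div_eq_iff hne₂] at h'
      exact h'
    have key : r₁'' t - r₂'' t = A t * w t := by
      rw [e₁, e₂]; simp only [hAdef, hwdef]; ring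
    exact key ▸ h1
  have hφderiv : ∀ t ∈ Ioi (0:ℝ), HasDerivAt φ (2 * A t * φ t) t := by
    intro t ht
    have h : HasDerivAt (fun x => w x ^ 2) (↑(2:ℕ) * w t ^ (2 - 1) * (A t * w t)) t := (hwderiv t ht).pow 2
    convert h using 1
    simp [hφdef]; ring
  have hwcont : ContinuousOn w (Ici 0) := fun t ht =>
    ((hr₁'' t ht).continuousWithinAt.sub (hr₂'' t ht).continuousWithinAt)
  have hφcont : ContinuousOn φ (Ici 0) := hwcont.pow 2
  -- choose ε with derivatives small
  have hc₁ : Tendsto r₁' (𝓝[Ici 0] 0) (𝓝 0) := by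
    have := (hr₁'' 0 (Set.mem_Ici.2 le_rfl)).continuousWithinAt
    rwa [ContinuousWithinAt, h0₁'] at this
  have hc₂ : Tendsto r₂' (𝓝[Ici 0] 0) (𝓝 0) := by
    have := (hr₂'' 0 (Set.mem_Ici.2 le_rfl)).continuousWithinAt
    rwa [ContinuousWithinAt, h0₂'] at this
  have hev : ∀ᶠ t in 𝓝[Ici 0] 0, r₁' t < 1/2 ∧ r₂' t < 1/2 :=
    (hc₁.eventually_lt_const (by norm_num : (0:ℝ) < 1/2)).and
      (hc₂.eventually_lt_const (by norm_num : (0:ℝ) < 1/2))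
  obtain ⟨ε, hε, hsub⟩ := mem_nhdsGE_iff_exists_Icc_subset.1 hev
  -- φ vanishes on [0, ε]
  have hanti : AntitoneOn φ (Icc 0 ε) := by
    apply antitoneOn_of_deriv_nonpos (convex_Icc 0 ε) (hφcont.mono Icc_subset_Ici_self)
    · intro x hx
      rw [interior_Icc] at hx
      exact ((hφderiv x hx.1).differentiableAt).differentiableWithinAt
    · intro x hx
      rw [interior_Icc] at hx
      rw [(hφderiv x hx.1).deriv]
      have hxI : x ∈ Icc 0 ε := ⟨hx.1.le, hx.2.le⟩
      obtain ⟨hs₁, hs₂⟩ := hsub hxI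
      have hp₁ := hlt₁ x hx.1
      have hp₂ := hlt₂ x hx.1
      have hc : 0 ≤ ((n:ℝ)-1)/x := div_nonneg (by linarith) hx.1.le
      have hS : (r₁' x)^2 + r₁' x * r₂' x + (r₂' x)^2 ≤ 1 := by nlinarith [hp₁.1, hp₂.1]
      have hA0 : A x ≤ 0 := by
        simp only [hAdef]
        nlinarith [mul_nonneg hc (by linarith : 0 ≤ 1 - ((r₁' x)^2 + r₁' x * r₂' x + (r₂' x)^2)), hp₁.1, hp₂.1]
      have hφpos : 0 ≤ φ x := sq_nonneg (w x)
      nlinarith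
  have hφ0 : ∀ t ∈ Icc 0 ε, φ t = 0 := by
    intro t ht
    have h1 : φ t ≤ φ 0 := hanti (left_mem_Icc.2 hε.le) ht ht.1
    have h2 : φ 0 = 0 := by simp [hφdef, hw0]
    have h3 : 0 ≤ φ t := sq_nonneg (w t)
    linarith
  -- Gronwall on [ε, ∞)
  set M : ℝ := 3 * ((n:ℝ)-1) / ε with hMdef
  have hAM : ∀ x, ε ≤ x → A x ≤ M := by
    intro x hx
    have hx0 : (0:ℝ) < x := lt_of_lt_of_le hε hx
    have hp₁ := hlt₁ x hx0
    have hp₂ := hlt₂ x hx0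
    have hc : 0 ≤ ((n:ℝ)-1)/x := div_nonneg (by linarith) hx0.le
    have hcM : ((n:ℝ)-1)/x ≤ ((n:ℝ)-1)/ε := by
      rw [div_le_div_iff₀ hx0 hε]; nlinarith
    have hS : (r₁' x)^2 + r₁' x * r₂' x + (r₂' x)^2 ≤ 3 := by nlinarith [hp₁.1, hp₂.1, hp₁.2, hp₂.2]
    have h1 : ((n:ℝ)-1)/x * ((r₁' x)^2 + r₁' x * r₂' x + (r₂' x)^2) ≤ ((n:ℝ)-1)/x * 3 :=
      mul_le_mul_of_nonneg_left hS hc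
    have h2 : ((n:ℝ)-1)/x * (1 - ((r₁' x)^2 + r₁' x * r₂' x + (r₂' x)^2))
        = ((n:ℝ)-1)/x - ((n:ℝ)-1)/x * ((r₁' x)^2 + r₁' x * r₂' x + (r₂' x)^2) := by ring
    have hthis : A x ≤ ((n:ℝ)-1)/x * 3 := by
      simp only [hAdef]
      linarith [hp₁.1, hp₂.1]
    calc A x ≤ ((n:ℝ)-1)/x * 3 := hthis
      _ ≤ ((n:ℝ)-1)/ε * 3 := by linarith
      _ = M := by rw [hMdef]; ring
  set ψ : ℝ → ℝ := fun t => φ t * Real.exp (-(2*M)*t) with hψdef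
  have hψanti : AntitoneOn ψ (Ici ε) := by
    apply antitoneOn_of_deriv_nonpos (convex_Ici ε)
    · exact (hφcont.mono (Ici_subset_Ici.2 hε.le)).mul
        ((Real.continuous_exp.comp (continuous_const.mul continuous_id)).continuousOn)
    · intro x hx
      rw [interior_Ici] at hx
      have hx0 : (0:ℝ) < x := lt_trans hε hx
      have hexp : HasDerivAt (fun t => Real.exp (-(2*M)*t)) (Real.exp (-(2*M)*x) * (-(2*M))) x := by
        simpa using (HasDerivAt.exp ((hasDerivAt_id x).const_mul (-(2*M))))
      exact (((hφderiv x hx0).mul hexp).differentiableAt).differentiableWithinAt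
    · intro x hx
      rw [interior_Ici] at hx
      have hx0 : (0:ℝ) < x := lt_trans hε hx
      have hexp : HasDerivAt (fun t => Real.exp (-(2*M)*t)) (Real.exp (-(2*M)*x) * (-(2*M))) x := by
        simpa using (HasDerivAt.exp ((hasDerivAt_id x).const_mul (-(2*M))))
      rw [(show HasDerivAt ψ _ x from (hφderiv x hx0).mul hexp).deriv]
      have hφpos : 0 ≤ φ x := sq_nonneg (w x)
      have hepos : (0:ℝ) < Real.exp (-(2*M)*x) := Real.exp_pos _
      have hAMx : A x ≤ M := hAM x hx.le
      nlinarith [mul_nonneg (mul_nonneg hepos.le hφpos) (sub_nonneg.2 hAMx)]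
  have hφ0' : ∀ t, ε ≤ t → φ t = 0 := by
    intro t ht
    have h1 : ψ t ≤ ψ ε := hψanti self_mem_Ici ht ht
    have h2 : ψ ε = 0 := by
      have := hφ0 ε (right_mem_Icc.2 hε.le)
      simp [hψdef, this]
    have hepos : (0:ℝ) < Real.exp (-(2*M)*t) := Real.exp_pos _
    have h3 : 0 ≤ φ t := sq_nonneg (w t)
    have h4 : ψ t = φ t * Real.exp (-(2*M)*t) := rfl
    have h5 : φ t * Real.exp (-(2*M)*t) = 0 :=
      le_antisymm (by rw [← h4]; linarith) (mul_nonneg h3 hepos.le)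
    rcases mul_eq_zero.1 h5 with h | h
    · exact h
    · exact absurd h hepos.ne'
  have hwzero : ∀ t, 0 ≤ t → r₁' t = r₂' t := by
    intro t ht
    have hφt : φ t = 0 := by
      rcases le_total t ε with h | h
      · exact hφ0 t ⟨ht, h⟩
      · exact hφ0' t h
    have : w t = 0 := by
      have h : w t ^ 2 = 0 := hφt
      exact sq_eq_zero_iff.1 h
    simpa [hwdef, sub_eq_zero] using this
  -- conclude
  intro t ht
  have key := eq_of_has_deriv_right_eq (a := 0) (b := t) (f' := r₁')
    (fun x hx => (hr₁' x hx.1).mono (Ici_subset_Ici.2 hx.1))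
    (fun x hx => by
      have h := (hr₂' x hx.1).mono (Ici_subset_Ici.2 hx.1)
      rwa [← hwzero x hx.1] at h)
    (fun x hx => ((hr₁' x hx.1).continuousWithinAt).mono Icc_subset_Ici_self)
    (fun x hx => ((hr₂' x hx.1).continuousWithinAt).mono Icc_subset_Ici_self)
    (by rw [h0₁, h0₂])
  exact key t (right_mem_Icc.2 ht)
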